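/- (Weight invariance in the extended language) In the language of arithmetic extended by countably many fresh constants c₀, c₁, c₂, …, let 𝒜' be the base consisting of the rules of 𝒜 (over closed terms of the extended language) together with the axiom rules ⊢ 0 = c_i for every i, and extend the weight function by w(c_i) = 0. Then: if ⊢_𝒜' t₁ = t₂ then w(t₁) = w(t₂); consequently S(0) = 0 is not derivable in 𝒜' and the base 𝒜' does not support ⊥. -/
import Mathlib


/-- Closed terms of the extended language of arithmetic: generated from 0 and
countably many fresh constants c₀, c₁, c₂, … by successor S, + and ·. -/
inductive Term : Type
  | zero : Term
  | const : ℕ → Term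
  | S : Term → Term
  | add : Term → Term → Term
  | mul : Term → Term → Term

/-- The numeral n̄ = Sⁿ(0). -/
def numeral : ℕ → Term
  | 0 => Term.zero
  | n + 1 => Term.S (numeral n)

/-- Atomic formulas: equations t = s between closed terms. -/
abbrev Atom : Type := Term × Term

/-- The extended weight function on closed terms, with w(c_i) = 0. -/
def w : Term → ℕ
  | .zero => 0
  | .const _ => 0
  | .S t => w t + 1
  | .add t s => w t + w s
  | .mul t s => w t * w s

/-- An atomic rule: finitely many atomic premises and an atomic conclusion. -/
structure Rule : Type where
  prems : List Atom
  concl : Atom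

/-- A base is a set of atomic rules. -/
abbrev Base : Type := Set Rule

/-- Derivability of an atom in a base, by composing the rules of the base. -/
inductive Deriv (B : Base) : Atom → Prop
  | step (r : Rule) (hr : r ∈ B) (hp : ∀ a ∈ r.prems, Deriv B a) : Deriv B r.concl

/-- The rules of the extended arithmetic base 𝒜′: the rules of 𝒜 over the
extended language together with the axiom rules ⊢ 0 = c_i. -/
inductive ARule' : Rule → Prop
  | eq1 (t : Term) : ARule' ⟨[], (t, t)⟩
  | eq2 (t s : Term) : ARule' ⟨[(t, s)], (s, t)⟩
  | eq3 (t s u : Term) : ARule' ⟨[(t, s), (s, u)], (t, u)⟩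
  | pa1 (t : Term) (a : Atom) : ARule' ⟨[(Term.S t, Term.zero)], a⟩
  | pa2 (t s : Term) : ARule' ⟨[(Term.S t, Term.S s)], (t, s)⟩
  | pa3 (t : Term) : ARule' ⟨[], (Term.add t Term.zero, t)⟩
  | pa4 (t s : Term) : ARule' ⟨[], (Term.add t (Term.S s), Term.S (Term.add t s))⟩
  | pa5 (t : Term) : ARule' ⟨[], (Term.mul t Term.zero, Term.zero)⟩
  | pa6 (t s : Term) : ARule' ⟨[], (Term.mul t (Term.S s), Term.add (Term.mul t s) t)⟩
  | czero (i : ℕ) : ARule' ⟨[], (Term.zero, Term.const i)⟩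

/-- The extended arithmetic base 𝒜′. -/
def ABase' : Base := { r | ARule' r }

/-- weight invariance in the extended language: if ⊢_𝒜′ t₁ = t₂ then
w(t₁) = w(t₂); consequently S(0) = 0 is not derivable in 𝒜′ and 𝒜′ does not
support ⊥ (i.e. not every atom is derivable). -/
theorem ext_weight_invariant :
    (∀ t₁ t₂ : Term, Deriv ABase' (t₁, t₂) → w t₁ = w t₂) ∧
    ¬ Deriv ABase' (Term.S Term.zero, Term.zero) ∧
    ¬ (∀ a : Atom, Deriv ABase' a) := by
  have key : ∀ a : Atom, Deriv ABase' a → w a.1 = w a.2 := by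
    intro a h
    induction h with
    | step r hr hp ih =>
      cases hr with
      | eq1 t => rfl
      | eq2 t s => exact (ih (t, s) (by simp)).symm
      | eq3 t s u =>
        exact (ih (t, s) (by simp)).trans (ih (s, u) (by simp))
      | pa1 t a =>
        have := ih (Term.S t, Term.zero) (by simp)
        simp [w] at this
      | pa2 t s =>
        have := ih (Term.S t, Term.S s) (by simp)
        simpa [w] using this
      | pa3 t => simp [w]
      | pa4 t s => simp [w, Nat.add_assoc]
      | pa5 t => simp [w]
      | pa6 t s => simp [w, Nat.mul_add]
      | czero i => rfl
  refine ⟨fun t₁ t₂ h => key _ h, fun h => by simpa [w] using key _ h, fun h => by simpa [w] using key _ (h (Term.S Term.zero, Term.zero))⟩
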